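/- Let n ≥ 2, let ζ_1, …, ζ_{n-1} ∈ ℍ, and let t_1 < t_2 < … < t_{n-1} be the unique ordered solution of the equilibrium equations (17); set t_0 = -∞ and t_n = +∞. Fix k_0 ∈ {1, 2, …, n} and a point x_{k_0} ∈ (t_{k_0-1}, t_{k_0}). Then there exist unique points x_k ∈ (t_{k-1}, t_k) for each k ∈ {1, …, n} \ {k_0} such that x_1 < x_2 < … < x_n satisfy the equilibrium equations (10): for each k = 1, …, n, ∑_{j≠k} 2/(x_k - x_j) - ∑_{j=1}^{n-1} (1/(x_k - ζ_j) + 1/(x_k - conj(ζ_j))) = 0. -/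

import Mathlib

open Finset Complex ComplexConjugate

section HelperLemmas
open Polynomial Filter Topology

private lemma eval_derivative_prod' {ι : Type*} [DecidableEq ι] (s : Finset ι) (f : ι → Polynomial ℝ)
    (y : ℝ) (h : ∀ i ∈ s, (f i).eval y ≠ 0) :
    (derivative (∏ i ∈ s, f i)).eval y =
      (∏ i ∈ s, (f i).eval y) * ∑ i ∈ s, (derivative (f i)).eval y / (f i).eval y := by
  classical
  induction s using Finset.induction with
  | empty => simp
  | insert _ _ ha ih =>
    rename_i a s
    rw [Finset.prod_insert ha, derivative_mul, eval_add, eval_mul, eval_mul,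
      Finset.prod_insert ha, Finset.sum_insert ha,
      ih (fun i hi => h i (Finset.mem_insert_of_mem hi)), eval_prod]
    have hfa : (f a).eval y ≠ 0 := h a (Finset.mem_insert_self a s)
    field_simp

private lemma sq_dvd_of_double_root {p : Polynomial ℝ} {c : ℝ} (h0 : p.IsRoot c)
    (h1 : (derivative p).IsRoot c) : (X - C c) ^ 2 ∣ p := by
  obtain ⟨q, rfl⟩ := (dvd_iff_isRoot).2 h0
  have hq : q.IsRoot c := by
    have := h1
    rw [derivative_mul, derivative_X_sub_C, IsRoot, eval_add, eval_mul] at this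
    simp only [eval_mul, eval_sub, eval_X, eval_C, sub_self, zero_mul, add_zero, eval_one,
      one_mul] at this
    exact this
  obtain ⟨r, rfl⟩ := (dvd_iff_isRoot).2 hq
  exact ⟨r, by ring⟩

private lemma monic_dvd_eq {p q : Polynomial ℝ} (hp : p.Monic) (hq : q.Monic)
    (hdeg : p.natDegree = q.natDegree) (hdvd : p ∣ q) : p = q := by
  obtain ⟨c, rfl⟩ := hdvd
  have hc0 : c ≠ 0 := by
    rintro rfl
    exact (by simp : ¬ (0 : Polynomial ℝ).Monic) (by simp only [mul_zero] at hq; exact hq)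
  have hdc : c.natDegree = 0 := by
    have := natDegree_mul hp.ne_zero hc0
    omega
  have hl : c.leadingCoeff = 1 := by
    have h2 := hq.leadingCoeff
    rw [leadingCoeff_mul, hp.leadingCoeff, one_mul] at h2
    exact h2
  have hc1 : c = C 1 := by
    rw [← hl, leadingCoeff, hdc]
    exact eq_C_of_natDegree_eq_zero hdc
  rw [hc1, map_one, mul_one]

private lemma pair_term_eq (s a b : ℝ) (hb : b ≠ 0) :
    1 / ((s : ℂ) - ((a : ℂ) + (b : ℂ) * I)) + 1 / ((s : ℂ) - conj ((a : ℂ) + (b : ℂ) * I)) =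
      ((2 * (s - a) / ((s - a) ^ 2 + b ^ 2) : ℝ) : ℂ) := by
  have hc : conj ((a : ℂ) + (b : ℂ) * I) = (a : ℂ) - (b : ℂ) * I := by
    simp [map_add, map_mul, conj_ofReal, conj_I]
    ring
  have h1 : (s : ℂ) - ((a : ℂ) + (b : ℂ) * I) ≠ 0 := by
    intro h
    have := congrArg Complex.im h
    simp at this
    exact hb this
  have h2 : (s : ℂ) - ((a : ℂ) - (b : ℂ) * I) ≠ 0 := by
    intro h
    have := congrArg Complex.im h
    simp at this
    exact hb this
  rw [hc, div_add_div _ _ h1 h2]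
  have hprod : ((s : ℂ) - ((a : ℂ) + (b : ℂ) * I)) * ((s : ℂ) - ((a : ℂ) - (b : ℂ) * I))
      = (((s - a) ^ 2 + b ^ 2 : ℝ) : ℂ) := by
    push_cast
    linear_combination (-(b : ℂ) ^ 2) * Complex.I_sq
  have hsum : (1 : ℂ) * ((s : ℂ) - ((a : ℂ) - (b : ℂ) * I))
      + ((s : ℂ) - ((a : ℂ) + (b : ℂ) * I)) * 1 = ((2 * (s - a) : ℝ) : ℂ) := by
    push_cast
    ring
  rw [hsum, hprod, ← Complex.ofReal_div]

variable {m : ℕ}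

private noncomputable def Qpoly (a b : Fin m → ℝ) : Polynomial ℝ :=
  ∏ j, ((X - C (a j)) ^ 2 + C ((b j) ^ 2))

private noncomputable def qpoly (t : Fin m → ℝ) : Polynomial ℝ := ∏ k, (X - C (t k))

private noncomputable def rpoly (t : Fin m → ℝ) (k : Fin m) : Polynomial ℝ :=
  ∏ j ∈ Finset.univ.erase k, (X - C (t j))

private lemma Qpoly_eval_pos (a b : Fin m → ℝ) (hb : ∀ j, b j ≠ 0) (s : ℝ) :
    0 < (Qpoly a b).eval s := by
  rw [Qpoly, eval_prod]
  apply Finset.prod_pos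
  intro j _
  simp only [eval_add, eval_pow, eval_sub, eval_X, eval_C]
  have := hb j
  positivity

private lemma qpoly_eq (t : Fin m → ℝ) (k : Fin m) :
    qpoly t = (X - C (t k)) * rpoly t k := by
  rw [qpoly, rpoly]
  exact (Finset.mul_prod_erase Finset.univ (fun j => X - C (t j)) (Finset.mem_univ k)).symm

private lemma rpoly_eval_ne (t : Fin m → ℝ) (hinj : Function.Injective t) (k : Fin m) :
    (rpoly t k).eval (t k) ≠ 0 := by
  rw [rpoly, eval_prod]
  apply Finset.prod_ne_zero_iff.2
  intro j hj
  simp only [eval_sub, eval_X, eval_C, sub_ne_zero]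
  exact fun h => (Finset.mem_erase.1 hj).1 (hinj h.symm)

private lemma rpoly_eval_zero (t : Fin m → ℝ) {j k : Fin m} (hjk : j ≠ k) :
    (rpoly t k).eval (t j) = 0 := by
  rw [rpoly, eval_prod]
  exact Finset.prod_eq_zero (Finset.mem_erase.2 ⟨hjk, Finset.mem_univ j⟩) (by simp)

private lemma Qfactor_monic (aj bj : ℝ) : ((X - C aj) ^ 2 + C (bj ^ 2)).Monic := by
  apply Monic.add_of_left ((monic_X_sub_C aj).pow 2)
  have h2 : ((X - C aj) ^ 2).degree = 2 := by
    rw [degree_pow, degree_X_sub_C]; rfl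
  rw [h2]
  exact lt_of_le_of_lt degree_C_le (by norm_num)

private lemma Qfactor_natDegree (aj bj : ℝ) : ((X - C aj) ^ 2 + C (bj ^ 2)).natDegree = 2 := by
  have h2 : ((X - C aj) ^ 2).degree = 2 := by
    rw [degree_pow, degree_X_sub_C]; rfl
  have hd : ((X - C aj) ^ 2 + C (bj ^ 2)).degree = 2 := by
    rw [degree_add_eq_left_of_degree_lt, h2]
    rw [h2]
    exact lt_of_le_of_lt degree_C_le (by norm_num)
  exact natDegree_eq_of_degree_eq_some hd

private lemma Qpoly_monic (a b : Fin m → ℝ) : (Qpoly a b).Monic :=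
  monic_prod_of_monic _ _ fun j _ => Qfactor_monic (a j) (b j)

private lemma Qpoly_natDegree (a b : Fin m → ℝ) : (Qpoly a b).natDegree = 2 * m := by
  rw [Qpoly, natDegree_prod _ _ (fun j _ => (Qfactor_monic (a j) (b j)).ne_zero)]
  simp only [Qfactor_natDegree, Finset.sum_const, Finset.card_univ, Fintype.card_fin,
    smul_eq_mul]
  ring

private lemma qpoly_monic (t : Fin m → ℝ) : (qpoly t).Monic :=
  monic_prod_of_monic _ _ fun k _ => monic_X_sub_C (t k)

private lemma qpoly_natDegree (t : Fin m → ℝ) : (qpoly t).natDegree = m := by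
  rw [qpoly, natDegree_prod _ _ (fun k _ => X_sub_C_ne_zero (t k))]
  simp

private lemma rpoly_monic (t : Fin m → ℝ) (k : Fin m) : (rpoly t k).Monic :=
  monic_prod_of_monic _ _ fun j _ => monic_X_sub_C (t j)

private lemma rpoly_natDegree (t : Fin m → ℝ) (k : Fin m) : (rpoly t k).natDegree = m - 1 := by
  rw [rpoly, natDegree_prod _ _ (fun j _ => X_sub_C_ne_zero (t j))]
  simp [Finset.card_erase_of_mem]

private noncomputable def βcoef (t a b : Fin m → ℝ) (k : Fin m) : ℝ :=
  (Qpoly a b).eval (t k) / ((rpoly t k).eval (t k)) ^ 2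

private noncomputable def Sfun (t β : Fin m → ℝ) (s : ℝ) : ℝ := s - ∑ k, β k / (s - t k)

private noncomputable def Ppoly (t a b : Fin m → ℝ) (lam : ℝ) : Polynomial ℝ :=
  (X - C lam) * qpoly t - ∑ k, C (βcoef t a b k) * rpoly t k

private def Gap {n : ℕ} (t : Fin m → ℝ) (k : Fin n) : Set ℝ :=
  {s | ∀ j : Fin m, ((j : ℕ) < (k : ℕ) → t j < s) ∧ ((k : ℕ) ≤ (j : ℕ) → s < t j)}

-- assume earlier lemmas available; restated as axioms? no — we'll concatenate files later.

private lemma key_identity (t a b : Fin m → ℝ) (hinj : Function.Injective t)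
    (hb : ∀ j, b j ≠ 0)
    (h17 : ∀ k, (derivative (Qpoly a b)).eval (t k) * (rpoly t k).eval (t k)
      = 2 * (Qpoly a b).eval (t k) * (derivative (rpoly t k)).eval (t k)) :
    Qpoly a b = qpoly t ^ 2 + ∑ k, C (βcoef t a b k) * (rpoly t k) ^ 2 := by
  classical
  set N : Polynomial ℝ := ∑ k, C (βcoef t a b k) * (rpoly t k) ^ 2 with hN
  set E : Polynomial ℝ := Qpoly a b - qpoly t ^ 2 - N with hE
  have hqval : ∀ k, (qpoly t).eval (t k) = 0 := by
    intro k
    rw [qpoly_eq t k]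
    simp
  have hNval : ∀ k, N.eval (t k) = βcoef t a b k * ((rpoly t k).eval (t k)) ^ 2 := by
    intro k
    rw [hN, eval_finset_sum]
    rw [Finset.sum_eq_single k]
    · simp
    · intro j _ hj
      simp [rpoly_eval_zero t (Ne.symm hj)]
    · intro h
      exact absurd (Finset.mem_univ k) h
  have hroot : ∀ k, E.IsRoot (t k) := by
    intro k
    have hr := rpoly_eval_ne t hinj k
    simp only [hE, IsRoot, eval_sub, eval_pow, hqval k, hNval k, βcoef]
    field_simp
    ring
  have hroot' : ∀ k, (derivative E).IsRoot (t k) := by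
    intro k
    have hr := rpoly_eval_ne t hinj k
    have e1 : (derivative (qpoly t ^ 2)).eval (t k) = 0 := by
      rw [derivative_pow]
      simp [hqval k]
    have e2 : (derivative N).eval (t k)
        = βcoef t a b k * (2 * (rpoly t k).eval (t k) * (derivative (rpoly t k)).eval (t k)) := by
      rw [hN, derivative_sum, eval_finset_sum, Finset.sum_eq_single k]
      · rw [derivative_C_mul, derivative_pow]
        simp only [eval_mul, eval_C, eval_pow, pow_one, Nat.cast_ofNat]
        ring
      · intro j _ hj
        rw [derivative_C_mul, derivative_pow]
        simp [rpoly_eval_zero t (Ne.symm hj)]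
      · intro h
        exact absurd (Finset.mem_univ k) h
    have hEd : derivative E = derivative (Qpoly a b) - derivative (qpoly t ^ 2) - derivative N := by
      rw [hE, derivative_sub, derivative_sub]
    rw [IsRoot, hEd, eval_sub, eval_sub, e1, e2, sub_zero, βcoef]
    have h17k := h17 k
    field_simp
    linear_combination h17k
  have hdvd : qpoly t ^ 2 ∣ E := by
    have hq2 : qpoly t ^ 2 = ∏ k, (X - C (t k)) ^ 2 := by
      rw [qpoly, ← Finset.prod_pow]
    rw [hq2]
    apply Finset.prod_dvd_of_coprime
    · intro i _ j _ hij
      exact ((pairwise_coprime_X_sub_C hinj hij).pow : IsCoprime _ _)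
    · intro k _
      exact sq_dvd_of_double_root (hroot k) (hroot' k)
  have hq2monic : ((qpoly t) ^ 2).Monic := (qpoly_monic t).pow 2
  have hq2deg : ((qpoly t) ^ 2).degree = ((2 * m : ℕ) : WithBot ℕ) := by
    rw [degree_eq_natDegree hq2monic.ne_zero, natDegree_pow, qpoly_natDegree]
  have hdegE : E.degree < ((2 * m : ℕ) : WithBot ℕ) := by
    have h1 : (Qpoly a b - qpoly t ^ 2).degree < ((2 * m : ℕ) : WithBot ℕ) := by
      have heq : (Qpoly a b).degree = ((qpoly t) ^ 2).degree := by
        rw [degree_eq_natDegree (Qpoly_monic a b).ne_zero, Qpoly_natDegree,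
          degree_eq_natDegree hq2monic.ne_zero, natDegree_pow, qpoly_natDegree, mul_comm]
      calc (Qpoly a b - qpoly t ^ 2).degree < (Qpoly a b).degree :=
            degree_sub_lt heq (Qpoly_monic a b).ne_zero
              (by rw [(Qpoly_monic a b).leadingCoeff, (hq2monic).leadingCoeff])
        _ = ((2 * m : ℕ) : WithBot ℕ) := by
            rw [degree_eq_natDegree (Qpoly_monic a b).ne_zero, Qpoly_natDegree]
    have h2 : N.degree < ((2 * m : ℕ) : WithBot ℕ) := by
      rw [hN]
      apply lt_of_le_of_lt (degree_sum_le _ _)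
      rw [Finset.sup_lt_iff (by exact_mod_cast WithBot.bot_lt_coe _)]
      intro k _
      have hk1 : 1 ≤ m := by have := k.isLt; omega
      calc (C (βcoef t a b k) * rpoly t k ^ 2).degree
          ≤ (C (βcoef t a b k)).degree + (rpoly t k ^ 2).degree := degree_mul_le _ _
        _ ≤ 0 + ((2 * (m - 1) : ℕ) : WithBot ℕ) := by
            apply add_le_add degree_C_le
            rw [degree_pow]
            calc 2 • (rpoly t k).degree ≤ 2 • ((m - 1 : ℕ) : WithBot ℕ) := by
                  apply nsmul_le_nsmul_right
                  rw [← rpoly_natDegree t k]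
                  exact degree_le_natDegree
              _ = ((2 * (m - 1) : ℕ) : WithBot ℕ) := by
                  rw [nsmul_eq_mul]
                  push_cast
                  ring
        _ < ((2 * m : ℕ) : WithBot ℕ) := by
            rw [zero_add]
            exact_mod_cast (by omega : 2 * (m - 1) < 2 * m)
    calc E.degree ≤ max (Qpoly a b - qpoly t ^ 2).degree N.degree := degree_sub_le _ _
      _ < ((2 * m : ℕ) : WithBot ℕ) := max_lt h1 h2
  have hE0 : E = 0 := by
    by_contra h
    have := degree_le_of_dvd hdvd h
    rw [hq2deg] at this
    exact absurd (lt_of_le_of_lt this hdegE) (lt_irrefl _)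
  have h2 : Qpoly a b - (qpoly t ^ 2 + N) = 0 := by
    rw [← sub_sub]
    exact hE0
  rw [hN] at h2
  exact sub_eq_zero.1 h2

private lemma wronskian_eq (t a b : Fin m → ℝ) (hinj : Function.Injective t)
    (hb : ∀ j, b j ≠ 0)
    (h17 : ∀ k, (derivative (Qpoly a b)).eval (t k) * (rpoly t k).eval (t k)
      = 2 * (Qpoly a b).eval (t k) * (derivative (rpoly t k)).eval (t k)) (lam : ℝ) :
    derivative (Ppoly t a b lam) * qpoly t - Ppoly t a b lam * derivative (qpoly t)
      = Qpoly a b := by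
  classical
  set N : Polynomial ℝ := ∑ k, C (βcoef t a b k) * rpoly t k with hN
  have hterm : ∀ k : Fin m, rpoly t k * derivative (qpoly t) - derivative (rpoly t k) * qpoly t
      = rpoly t k ^ 2 := by
    intro k
    rw [qpoly_eq t k, derivative_mul]
    have : derivative (X - C (t k)) = 1 := by
      rw [derivative_sub, derivative_X, derivative_C, sub_zero]
    rw [this]
    ring
  have hNid : N * derivative (qpoly t) - derivative N * qpoly t
      = ∑ k, C (βcoef t a b k) * rpoly t k ^ 2 := by
    rw [hN, derivative_sum, Finset.sum_mul, Finset.sum_mul, ← Finset.sum_sub_distrib]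
    apply Finset.sum_congr rfl
    intro k _
    rw [derivative_C_mul]
    calc C (βcoef t a b k) * rpoly t k * derivative (qpoly t)
          - C (βcoef t a b k) * derivative (rpoly t k) * qpoly t
        = C (βcoef t a b k) * (rpoly t k * derivative (qpoly t)
            - derivative (rpoly t k) * qpoly t) := by ring
      _ = C (βcoef t a b k) * rpoly t k ^ 2 := by rw [hterm k]
  have hPd : derivative (Ppoly t a b lam)
      = qpoly t + (X - C lam) * derivative (qpoly t) - derivative N := by
    rw [Ppoly, derivative_sub, derivative_mul]
    have : derivative (X - C lam) = 1 := by
      rw [derivative_sub, derivative_X, derivative_C, sub_zero]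
    rw [this, one_mul, hN]
  rw [key_identity t a b hinj hb h17, ← hNid, hPd, Ppoly, ← hN]
  ring
private lemma Ppoly_eval (t a b : Fin m → ℝ) (lam s : ℝ) (hs : ∀ k, s ≠ t k) :
    (Ppoly t a b lam).eval s = (Sfun t (βcoef t a b) s - lam) * (qpoly t).eval s := by
  classical
  have hS : (Sfun t (βcoef t a b) s - lam) * (qpoly t).eval s
      = (s - lam) * (qpoly t).eval s
        - (∑ k, βcoef t a b k / (s - t k)) * (qpoly t).eval s := by
    rw [Sfun]
    ring
  rw [Ppoly, eval_sub, eval_mul, eval_sub, eval_X, eval_C, eval_finset_sum, hS]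
  congr 1
  rw [Finset.sum_mul]
  apply Finset.sum_congr rfl
  intro k _
  have hq : (qpoly t).eval s = (s - t k) * (rpoly t k).eval s := by
    rw [qpoly_eq t k]
    simp
  rw [eval_mul, eval_C, hq]
  have hne : s - t k ≠ 0 := sub_ne_zero.2 (hs k)
  field_simp

private lemma Ppoly_monic (t a b : Fin m → ℝ) (lam : ℝ) : (Ppoly t a b lam).Monic := by
  classical
  have hmq : ((X - C lam) * qpoly t).Monic := (monic_X_sub_C lam).mul (qpoly_monic t)
  have hdq : ((X - C lam) * qpoly t).degree = ((m + 1 : ℕ) : WithBot ℕ) := by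
    rw [degree_eq_natDegree hmq.ne_zero, natDegree_mul (X_sub_C_ne_zero lam)
      (qpoly_monic t).ne_zero, natDegree_X_sub_C, qpoly_natDegree, add_comm]
  have hdN : (∑ k, C (βcoef t a b k) * rpoly t k).degree < ((m + 1 : ℕ) : WithBot ℕ) := by
    apply lt_of_le_of_lt (degree_sum_le _ _)
    rw [Finset.sup_lt_iff (by exact_mod_cast WithBot.bot_lt_coe _)]
    intro k _
    calc (C (βcoef t a b k) * rpoly t k).degree
        ≤ (C (βcoef t a b k)).degree + (rpoly t k).degree := degree_mul_le _ _
      _ ≤ 0 + ((m - 1 : ℕ) : WithBot ℕ) := by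
          apply add_le_add degree_C_le
          rw [← rpoly_natDegree t k]
          exact degree_le_natDegree
      _ < ((m + 1 : ℕ) : WithBot ℕ) := by
          rw [zero_add]
          exact_mod_cast (by omega : m - 1 < m + 1)
  have : Ppoly t a b lam = (X - C lam) * qpoly t + (-(∑ k, C (βcoef t a b k) * rpoly t k)) := by
    rw [Ppoly]
    ring
  rw [this]
  apply hmq.add_of_left
  rw [degree_neg, hdq]
  exact hdN

private lemma Ppoly_natDegree (t a b : Fin m → ℝ) (lam : ℝ) :
    (Ppoly t a b lam).natDegree = m + 1 := by
  classical
  have hmq : ((X - C lam) * qpoly t).Monic := (monic_X_sub_C lam).mul (qpoly_monic t)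
  have hdq : ((X - C lam) * qpoly t).degree = ((m + 1 : ℕ) : WithBot ℕ) := by
    rw [degree_eq_natDegree hmq.ne_zero, natDegree_mul (X_sub_C_ne_zero lam)
      (qpoly_monic t).ne_zero, natDegree_X_sub_C, qpoly_natDegree, add_comm]
  have hdN : (∑ k, C (βcoef t a b k) * rpoly t k).degree < ((m + 1 : ℕ) : WithBot ℕ) := by
    apply lt_of_le_of_lt (degree_sum_le _ _)
    rw [Finset.sup_lt_iff (by exact_mod_cast WithBot.bot_lt_coe _)]
    intro k _
    calc (C (βcoef t a b k) * rpoly t k).degree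
        ≤ (C (βcoef t a b k)).degree + (rpoly t k).degree := degree_mul_le _ _
      _ ≤ 0 + ((m - 1 : ℕ) : WithBot ℕ) := by
          apply add_le_add degree_C_le
          rw [← rpoly_natDegree t k]
          exact degree_le_natDegree
      _ < ((m + 1 : ℕ) : WithBot ℕ) := by
          rw [zero_add]
          exact_mod_cast (by omega : m - 1 < m + 1)
  apply natDegree_eq_of_degree_eq_some
  rw [Ppoly, degree_sub_eq_left_of_degree_lt, hdq]
  rw [hdq]
  exact hdN

private lemma gap_ne (t : Fin m → ℝ) {n : ℕ} {k : Fin n} {s : ℝ} (hs : s ∈ Gap t k)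
    (j : Fin m) : s ≠ t j := by
  rcases lt_or_ge (j : ℕ) (k : ℕ) with h | h
  · exact ne_of_gt ((hs j).1 h)
  · exact ne_of_lt ((hs j).2 h)

private lemma gap_lt (t : Fin m → ℝ) {n : ℕ} (hmn : n ≤ m + 1) {k k' : Fin n} (hkk : k < k')
    {s s' : ℝ} (hs : s ∈ Gap t k) (hs' : s' ∈ Gap t k') : s < s' := by
  have hkv : (k : ℕ) < (k' : ℕ) := hkk
  have hj : (k : ℕ) < m := by
    have := k'.isLt
    omega
  have h1 := (hs ⟨(k : ℕ), hj⟩).2 (le_refl _)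
  have h2 := (hs' ⟨(k : ℕ), hj⟩).1 hkv
  linarith

private lemma Sfun_strictMono (t β : Fin m → ℝ) (hβ : ∀ j, 0 < β j) {n : ℕ} (k : Fin n)
    {s1 s2 : ℝ} (h1 : s1 ∈ Gap t k) (h2 : s2 ∈ Gap t k) (h12 : s1 < s2) :
    Sfun t β s1 < Sfun t β s2 := by
  have hdiff : Sfun t β s2 - Sfun t β s1
      = (s2 - s1) + ∑ j, (β j / (s1 - t j) - β j / (s2 - t j)) := by
    rw [Finset.sum_sub_distrib]
    rw [Sfun, Sfun]
    ring
  have hterm : ∀ j : Fin m, 0 ≤ β j / (s1 - t j) - β j / (s2 - t j) := by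
    intro j
    have hpos : 0 < (s1 - t j) * (s2 - t j) := by
      rcases lt_or_ge (j : ℕ) (k : ℕ) with h | h
      · exact mul_pos (sub_pos.2 ((h1 j).1 h)) (sub_pos.2 ((h2 j).1 h))
      · exact mul_pos_of_neg_of_neg (sub_neg.2 ((h1 j).2 h)) (sub_neg.2 ((h2 j).2 h))
    have hne1 : s1 - t j ≠ 0 := fun h => by rw [h, zero_mul] at hpos; exact lt_irrefl _ hpos
    have hne2 : s2 - t j ≠ 0 := fun h => by rw [h, mul_zero] at hpos; exact lt_irrefl _ hpos
    have heq : β j / (s1 - t j) - β j / (s2 - t j)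
        = β j * (s2 - s1) / ((s1 - t j) * (s2 - t j)) := by
      field_simp
      ring
    rw [heq]
    exact div_nonneg (mul_nonneg (hβ j).le (by linarith)) hpos.le
  have : 0 < Sfun t β s2 - Sfun t β s1 := by
    rw [hdiff]
    have hsum : 0 ≤ ∑ j, (β j / (s1 - t j) - β j / (s2 - t j)) :=
      Finset.sum_nonneg fun j _ => hterm j
    linarith
  linarith
private lemma level_equations (t a b : Fin m → ℝ) (hinj : Function.Injective t)
    (hb : ∀ j, b j ≠ 0)
    (h17 : ∀ k, (derivative (Qpoly a b)).eval (t k) * (rpoly t k).eval (t k)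
      = 2 * (Qpoly a b).eval (t k) * (derivative (rpoly t k)).eval (t k))
    {n : ℕ} (hmn : m + 1 = n) (x : Fin n → ℝ) (hx : StrictMono x)
    (hxt : ∀ (k : Fin n) (j : Fin m), x k ≠ t j) (lam : ℝ)
    (hlam : ∀ k, Sfun t (βcoef t a b) (x k) = lam) (k : Fin n) :
    ∑ j ∈ Finset.univ.erase k, 2 / (x k - x j)
      = ∑ j, 2 * (x k - a j) / ((x k - a j) ^ 2 + (b j) ^ 2) := by
  classical
  set P : Polynomial ℝ := ∏ i, (X - C (x i)) with hP
  have hPmonic : P.Monic := monic_prod_of_monic _ _ fun i _ => monic_X_sub_C (x i)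
  have hPdeg : P.natDegree = n := by
    rw [hP, natDegree_prod _ _ (fun i _ => X_sub_C_ne_zero (x i))]
    simp
  have hroots : ∀ i, (Ppoly t a b lam).IsRoot (x i) := by
    intro i
    rw [IsRoot, Ppoly_eval t a b lam (x i) (fun j => hxt i j), hlam i, sub_self, zero_mul]
  have hdvd : P ∣ Ppoly t a b lam := by
    rw [hP]
    apply Finset.prod_dvd_of_coprime
    · intro i _ j _ hij
      exact pairwise_coprime_X_sub_C hx.injective hij
    · intro i _
      exact dvd_iff_isRoot.2 (hroots i)
  have hPeq : P = Ppoly t a b lam := by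
    apply monic_dvd_eq hPmonic (Ppoly_monic t a b lam)
    · rw [hPdeg, Ppoly_natDegree, hmn]
    · exact hdvd
  -- local notation
  set G : Polynomial ℝ := ∏ i ∈ Finset.univ.erase k, (X - C (x i)) with hG
  have hPG : Ppoly t a b lam = (X - C (x k)) * G := by
    rw [← hPeq, hP, hG]
    exact (Finset.mul_prod_erase Finset.univ (fun i => X - C (x i)) (Finset.mem_univ k)).symm
  have hGe : G.eval (x k) ≠ 0 := by
    rw [hG, eval_prod]
    apply Finset.prod_ne_zero_iff.2
    intro i hi
    simp only [eval_sub, eval_X, eval_C, sub_ne_zero]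
    exact fun h => (Finset.mem_erase.1 hi).1 (hx.injective h.symm)
  have hqe : (qpoly t).eval (x k) ≠ 0 := by
    rw [qpoly, eval_prod]
    apply Finset.prod_ne_zero_iff.2
    intro j _
    simp only [eval_sub, eval_X, eval_C, sub_ne_zero]
    exact hxt k j
  have hW := wronskian_eq t a b hinj hb h17 lam
  -- first eval
  have heval1 : (Qpoly a b).eval (x k) = G.eval (x k) * (qpoly t).eval (x k) := by
    have := congrArg (eval (x k)) hW
    rw [eval_sub, eval_mul, eval_mul, (hroots k), zero_mul, sub_zero] at this
    rw [← this]
    congr 1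
    rw [hPG, derivative_mul]
    have hd1 : derivative (X - C (x k)) = 1 := by
      rw [derivative_sub, derivative_X, derivative_C, sub_zero]
    rw [hd1]
    simp
  -- second eval : derivative of wronskian
  have hW2 : derivative (Ppoly t a b lam) * qpoly t - Ppoly t a b lam * derivative (qpoly t)
      = Qpoly a b := hW
  have hWd : derivative (derivative (Ppoly t a b lam)) * qpoly t
      - Ppoly t a b lam * derivative (derivative (qpoly t)) = derivative (Qpoly a b) := by
    have := congrArg derivative hW2
    rw [derivative_sub, derivative_mul, derivative_mul] at this
    calc derivative (derivative (Ppoly t a b lam)) * qpoly t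
        - Ppoly t a b lam * derivative (derivative (qpoly t))
        = derivative (derivative (Ppoly t a b lam)) * qpoly t
            + derivative (Ppoly t a b lam) * derivative (qpoly t)
          - (derivative (Ppoly t a b lam) * derivative (qpoly t)
            + Ppoly t a b lam * derivative (derivative (qpoly t))) := by ring
      _ = derivative (Qpoly a b) := this
  have heval2 : (derivative (Qpoly a b)).eval (x k)
      = (derivative (derivative (Ppoly t a b lam))).eval (x k) * (qpoly t).eval (x k) := by
    have := congrArg (eval (x k)) hWd
    rw [eval_sub, eval_mul, eval_mul, (hroots k), zero_mul, sub_zero] at this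
    rw [← this]
  -- P'' at root
  have hd1 : derivative (X - C (x k)) = (1 : Polynomial ℝ) := by
    rw [derivative_sub, derivative_X, derivative_C, sub_zero]
  have hPp2 : (derivative (derivative (Ppoly t a b lam))).eval (x k)
      = 2 * (derivative G).eval (x k) := by
    rw [hPG, derivative_mul, hd1, one_mul, derivative_add, derivative_mul, hd1, one_mul]
    rw [eval_add, eval_add, eval_mul]
    simp only [eval_sub, eval_X, eval_C, sub_self, zero_mul, add_zero]
    ring
  -- log derivatives
  have hGd : (derivative G).eval (x k)
      = G.eval (x k) * ∑ i ∈ Finset.univ.erase k, 1 / (x k - x i) := by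
    rw [hG, eval_derivative_prod' _ _ _ (fun i hi => by
      simp only [eval_sub, eval_X, eval_C, sub_ne_zero]
      exact fun h => (Finset.mem_erase.1 hi).1 (hx.injective h.symm))]
    rw [eval_prod]
    congr 1
    apply Finset.sum_congr rfl
    intro i _
    have hdi : derivative (X - C (x i)) = (1 : Polynomial ℝ) := by
      rw [derivative_sub, derivative_X, derivative_C, sub_zero]
    rw [hdi]
    simp
  have hQd : (derivative (Qpoly a b)).eval (x k)
      = (Qpoly a b).eval (x k) * ∑ j, 2 * (x k - a j) / ((x k - a j) ^ 2 + (b j) ^ 2) := by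
    rw [Qpoly, eval_derivative_prod' _ _ _ (fun j _ => by
      simp only [eval_add, eval_pow, eval_sub, eval_X, eval_C]
      have := hb j
      positivity)]
    rw [eval_prod]
    congr 1
    apply Finset.sum_congr rfl
    intro j _
    have hdj : derivative ((X - C (a j)) ^ 2 + C ((b j) ^ 2)) = C 2 * (X - C (a j)) := by
      have hdi : derivative (X - C (a j)) = (1 : Polynomial ℝ) := by
        rw [derivative_sub, derivative_X, derivative_C, sub_zero]
      rw [derivative_add, derivative_C, add_zero, derivative_pow, hdi, pow_one, mul_one]
      norm_num
    rw [hdj]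
    simp only [eval_mul, eval_C, eval_add, eval_pow, eval_sub, eval_X]
  have hQpos := Qpoly_eval_pos a b hb (x k)
  have hcancel : (Qpoly a b).eval (x k) * (∑ j, 2 * (x k - a j) / ((x k - a j) ^ 2 + (b j) ^ 2))
      = (Qpoly a b).eval (x k) * (2 * ∑ i ∈ Finset.univ.erase k, 1 / (x k - x i)) := by
    rw [← hQd, heval2, hPp2, hGd, heval1]
    ring
  have hAB := mul_left_cancel₀ (ne_of_gt hQpos) hcancel
  rw [hAB, Finset.mul_sum]
  apply Finset.sum_congr rfl
  intro i _
  rw [mul_one_div]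

/-- the summed part of `Sfun` over any subset, tendsto at a regular point -/
private lemma tendsto_sum_part (t β : Fin m → ℝ) (F : Finset (Fin m)) {l : Filter ℝ} {c : ℝ}
    (hl : Tendsto id l (𝓝 c)) (hc : ∀ j ∈ F, c ≠ t j) :
    Tendsto (fun s => ∑ j ∈ F, β j / (s - t j)) l (𝓝 (∑ j ∈ F, β j / (c - t j))) := by
  apply tendsto_finset_sum
  intro j hj
  apply Tendsto.div tendsto_const_nhds (by simpa using hl.sub (tendsto_const_nhds (x := t j)))
  exact sub_ne_zero.2 (hc j hj)

private lemma tendsto_inv_sub_atTop (c : ℝ) :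
    Tendsto (fun s : ℝ => (s - c)⁻¹) (𝓝[<] c) atBot := by
  have h1 : Tendsto (fun s : ℝ => c - s) (𝓝[<] c) (𝓝[>] 0) := by
    rw [tendsto_nhdsWithin_iff]
    constructor
    · have : Tendsto (fun s : ℝ => c - s) (𝓝 c) (𝓝 (c - c)) :=
        (tendsto_const_nhds.sub tendsto_id)
      rw [sub_self] at this
      exact this.mono_left nhdsWithin_le_nhds
    · filter_upwards [eventually_mem_nhdsWithin] with s hs
      exact sub_pos.2 (Set.mem_Iio.1 hs)
  have h2 : Tendsto (fun s : ℝ => (c - s)⁻¹) (𝓝[<] c) atTop :=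
    tendsto_inv_nhdsGT_zero.comp h1
  have h3 := tendsto_neg_atTop_atBot.comp h2
  refine h3.congr fun s => ?_
  simp only [Function.comp_apply]
  rw [neg_inv, neg_sub]

private lemma tendsto_inv_sub_atBot (c : ℝ) :
    Tendsto (fun s : ℝ => (s - c)⁻¹) (𝓝[>] c) atTop := by
  have h1 : Tendsto (fun s : ℝ => s - c) (𝓝[>] c) (𝓝[>] 0) := by
    rw [tendsto_nhdsWithin_iff]
    constructor
    · have : Tendsto (fun s : ℝ => s - c) (𝓝 c) (𝓝 (c - c)) := (tendsto_id.sub tendsto_const_nhds)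
      rw [sub_self] at this
      exact this.mono_left nhdsWithin_le_nhds
    · filter_upwards [eventually_mem_nhdsWithin] with s hs
      exact sub_pos.2 (Set.mem_Ioi.1 hs)
  exact tendsto_inv_nhdsGT_zero.comp h1

private lemma tendsto_Sfun_atBot (t β : Fin m → ℝ) :
    Tendsto (Sfun t β) atBot atBot := by
  have hsum : Tendsto (fun s => ∑ j, β j / (s - t j)) atBot (𝓝 0) := by
    have h0 : Tendsto (fun s : ℝ => ∑ j : Fin m, β j * (s - t j)⁻¹) atBot (𝓝 (∑ j : Fin m, β j * 0)) := by
      apply tendsto_finset_sum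
      intro j _
      apply Tendsto.const_mul
      have h1 : Tendsto (fun s : ℝ => s - t j) atBot atBot := by
        simpa [sub_eq_add_neg] using tendsto_atBot_add_const_right atBot (-(t j)) tendsto_id
      have h2 := (tendsto_neg_atBot_atTop.comp h1).inv_tendsto_atTop
      have h3 := h2.neg
      rw [neg_zero] at h3
      refine h3.congr fun s => ?_
      simp only [Function.comp_apply, Pi.inv_apply]
      rw [← neg_inv, neg_neg]
    simp only [mul_zero, Finset.sum_const_zero] at h0
    exact h0.congr fun s => by simp [div_eq_mul_inv]
  have hev : ∀ᶠ s in (atBot : Filter ℝ), -(∑ j, β j / (s - t j)) ≤ 1 :=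
    (hsum.neg).eventually_lt_const (by norm_num) |>.mono fun s hs => hs.le
  have := tendsto_atBot_add_right_of_ge' (l := (atBot : Filter ℝ))
    (f := fun s : ℝ => s) (g := fun s => -(∑ j, β j / (s - t j))) 1 tendsto_id hev
  refine this.congr fun s => ?_
  rw [Sfun, sub_eq_add_neg]

private lemma tendsto_Sfun_atTop (t β : Fin m → ℝ) :
    Tendsto (Sfun t β) atTop atTop := by
  have hsum : Tendsto (fun s => ∑ j, β j / (s - t j)) atTop (𝓝 0) := by
    have h0 : Tendsto (fun s : ℝ => ∑ j : Fin m, β j * (s - t j)⁻¹) atTop (𝓝 (∑ j : Fin m, β j * 0)) := by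
      apply tendsto_finset_sum
      intro j _
      apply Tendsto.const_mul
      have h1 : Tendsto (fun s : ℝ => s - t j) atTop atTop := by
        simpa [sub_eq_add_neg] using tendsto_atTop_add_const_right atTop (-(t j)) tendsto_id
      exact h1.inv_tendsto_atTop
    simp only [mul_zero, Finset.sum_const_zero] at h0
    exact h0.congr fun s => by simp [div_eq_mul_inv]
  have hev : ∀ᶠ s in (atTop : Filter ℝ), -1 ≤ -(∑ j, β j / (s - t j)) := by
    have := (hsum.neg).eventually_const_lt (u := (-1 : ℝ)) (by norm_num)
    exact this.mono fun s hs => hs.le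
  have := tendsto_atTop_add_right_of_le' (l := (atTop : Filter ℝ))
    (f := fun s : ℝ => s) (g := fun s => -(∑ j, β j / (s - t j))) (-1) tendsto_id hev
  refine this.congr fun s => ?_
  rw [Sfun, sub_eq_add_neg]

private lemma Sfun_decomp (t β : Fin m → ℝ) (i : Fin m) (s : ℝ) :
    Sfun t β s = -(β i / (s - t i)) + (s - ∑ j ∈ Finset.univ.erase i, β j / (s - t j)) := by
  rw [Sfun, ← Finset.add_sum_erase _ _ (Finset.mem_univ i)]
  ring

private lemma tendsto_Sfun_left (t β : Fin m → ℝ) (hinj : Function.Injective t)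
    (hβ : ∀ j, 0 < β j) (i : Fin m) :
    Tendsto (Sfun t β) (𝓝[>] (t i)) atBot := by
  classical
  have hrest : Tendsto (fun s => s - ∑ j ∈ Finset.univ.erase i, β j / (s - t j)) (𝓝[>] (t i))
      (𝓝 (t i - ∑ j ∈ Finset.univ.erase i, β j / (t i - t j))) := by
    apply Tendsto.sub
    · exact tendsto_id.mono_left nhdsWithin_le_nhds
    · apply tendsto_sum_part t β _ (tendsto_id.mono_left nhdsWithin_le_nhds)
      intro j hj
      exact fun h => (Finset.mem_erase.1 hj).1 (hinj h.symm)
  have hmain : Tendsto (fun s => -(β i / (s - t i))) (𝓝[>] (t i)) atBot := by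
    have h3 := (tendsto_inv_sub_atBot (t i)).const_mul_atTop (hβ i)
    have h4 := tendsto_neg_atTop_atBot.comp h3
    refine h4.congr fun s => ?_
    simp only [Function.comp_apply]
    rw [div_eq_mul_inv]
  have hev : ∀ᶠ s in (𝓝[>] (t i)),
      (fun s => s - ∑ j ∈ Finset.univ.erase i, β j / (s - t j)) s
        ≤ (t i - ∑ j ∈ Finset.univ.erase i, β j / (t i - t j)) + 1 := by
    have := hrest.eventually_lt_const
      (by linarith : (t i - ∑ j ∈ Finset.univ.erase i, β j / (t i - t j))
        < (t i - ∑ j ∈ Finset.univ.erase i, β j / (t i - t j)) + 1)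
    exact this.mono fun s hs => hs.le
  have := tendsto_atBot_add_right_of_ge' _ _ hmain hev
  refine this.congr fun s => ?_
  rw [Sfun_decomp t β i s]

private lemma tendsto_Sfun_right (t β : Fin m → ℝ) (hinj : Function.Injective t)
    (hβ : ∀ j, 0 < β j) (i : Fin m) :
    Tendsto (Sfun t β) (𝓝[<] (t i)) atTop := by
  classical
  have hrest : Tendsto (fun s => s - ∑ j ∈ Finset.univ.erase i, β j / (s - t j)) (𝓝[<] (t i))
      (𝓝 (t i - ∑ j ∈ Finset.univ.erase i, β j / (t i - t j))) := by
    apply Tendsto.sub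
    · exact tendsto_id.mono_left nhdsWithin_le_nhds
    · apply tendsto_sum_part t β _ (tendsto_id.mono_left nhdsWithin_le_nhds)
      intro j hj
      exact fun h => (Finset.mem_erase.1 hj).1 (hinj h.symm)
  have hmain : Tendsto (fun s => -(β i / (s - t i))) (𝓝[<] (t i)) atTop := by
    have h3 : Tendsto (fun s : ℝ => β i * (s - t i)⁻¹) (𝓝[<] (t i)) atBot := by
      have := tendsto_inv_sub_atTop (t i)
      exact Tendsto.pos_mul_atBot (hβ i) tendsto_const_nhds this
    have h4 := tendsto_neg_atBot_atTop.comp h3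
    refine h4.congr fun s => ?_
    simp only [Function.comp_apply]
    rw [div_eq_mul_inv]
  have hev : ∀ᶠ s in (𝓝[<] (t i)),
      (t i - ∑ j ∈ Finset.univ.erase i, β j / (t i - t j)) - 1
        ≤ (fun s => s - ∑ j ∈ Finset.univ.erase i, β j / (s - t j)) s := by
    have := hrest.eventually_const_lt
      (by linarith : (t i - ∑ j ∈ Finset.univ.erase i, β j / (t i - t j)) - 1
        < (t i - ∑ j ∈ Finset.univ.erase i, β j / (t i - t j)))
    exact this.mono fun s hs => hs.le
  have := tendsto_atTop_add_right_of_le' _ _ hmain hev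
  refine this.congr fun s => ?_
  rw [Sfun_decomp t β i s]

private lemma exists_low {n : ℕ} (t β : Fin m → ℝ) (ht : StrictMono t) (hβ : ∀ j, 0 < β j)
    (hmn : n ≤ m + 1) (k : Fin n) (lam : ℝ) :
    ∃ u ∈ Gap t k, Sfun t β u < lam := by
  by_cases hk0 : (k : ℕ) = 0
  · have hg : ∀ᶠ s in (atBot : Filter ℝ), s ∈ Gap t k := by
      simp only [Gap, Set.mem_setOf_eq]
      rw [Filter.eventually_all]
      intro j
      filter_upwards [eventually_lt_atBot (t j)] with s hs
      exact ⟨fun h => absurd h (by omega), fun _ => hs⟩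
    have hS : ∀ᶠ s in (atBot : Filter ℝ), Sfun t β s < lam :=
      (tendsto_Sfun_atBot t β).eventually (eventually_lt_atBot lam)
    obtain ⟨u, hu1, hu2⟩ := (hg.and hS).exists
    exact ⟨u, hu1, hu2⟩
  · have him : (k : ℕ) - 1 < m := by
      have := k.isLt
      omega
    set i : Fin m := ⟨(k : ℕ) - 1, him⟩ with hi
    have hg : ∀ᶠ s in (𝓝[>] (t i)), s ∈ Gap t k := by
      simp only [Gap, Set.mem_setOf_eq]
      rw [Filter.eventually_all]
      intro j
      by_cases hjk : (k : ℕ) ≤ (j : ℕ)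
      · have hij : t i < t j := by
          apply ht
          rw [Fin.lt_def]
          simp only [hi]
          omega
        have hev : ∀ᶠ s in (𝓝[>] (t i)), s < t j :=
          (tendsto_id.mono_right nhdsWithin_le_nhds).eventually_lt_const hij
        filter_upwards [hev] with s hs
        exact ⟨fun h => absurd h (by omega), fun _ => hs⟩
      · have hji : (j : ℕ) ≤ (i : ℕ) := by
          simp only [hi]
          omega
        have htji : t j ≤ t i := ht.monotone (by rw [Fin.le_def]; exact hji)
        filter_upwards [eventually_mem_nhdsWithin] with s hs
        exact ⟨fun _ => lt_of_le_of_lt htji hs, fun h => absurd h hjk⟩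
    have hS : ∀ᶠ s in (𝓝[>] (t i)), Sfun t β s < lam :=
      (tendsto_Sfun_left t β ht.injective hβ i).eventually (eventually_lt_atBot lam)
    obtain ⟨u, hu1, hu2⟩ := (hg.and hS).exists
    exact ⟨u, hu1, hu2⟩

private lemma exists_high {n : ℕ} (t β : Fin m → ℝ) (ht : StrictMono t) (hβ : ∀ j, 0 < β j)
    (k : Fin n) (lam : ℝ) :
    ∃ v ∈ Gap t k, lam < Sfun t β v := by
  by_cases hkm : (k : ℕ) < m
  · set i : Fin m := ⟨(k : ℕ), hkm⟩ with hi
    have hg : ∀ᶠ s in (𝓝[<] (t i)), s ∈ Gap t k := by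
      simp only [Gap, Set.mem_setOf_eq]
      rw [Filter.eventually_all]
      intro j
      by_cases hjk : (j : ℕ) < (k : ℕ)
      · have hij : t j < t i := by
          apply ht
          rw [Fin.lt_def]
          simp only [hi]
          omega
        have hev : ∀ᶠ s in (𝓝[<] (t i)), t j < s :=
          (tendsto_id.mono_right nhdsWithin_le_nhds).eventually_const_lt hij
        filter_upwards [hev] with s hs
        exact ⟨fun _ => hs, fun h => absurd h (by omega)⟩
      · have hij : (i : ℕ) ≤ (j : ℕ) := by
          simp only [hi]
          omega
        have htij : t i ≤ t j := ht.monotone (by rw [Fin.le_def]; exact hij)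
        filter_upwards [eventually_mem_nhdsWithin] with s hs
        exact ⟨fun h => absurd h hjk, fun _ => lt_of_lt_of_le hs htij⟩
    have hS : ∀ᶠ s in (𝓝[<] (t i)), lam < Sfun t β s :=
      (tendsto_Sfun_right t β ht.injective hβ i).eventually (eventually_gt_atTop lam)
    obtain ⟨v, hv1, hv2⟩ := (hg.and hS).exists
    exact ⟨v, hv1, hv2⟩
  · have hg : ∀ᶠ s in (atTop : Filter ℝ), s ∈ Gap t k := by
      simp only [Gap, Set.mem_setOf_eq]
      rw [Filter.eventually_all]
      intro j
      filter_upwards [eventually_gt_atTop (t j)] with s hs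
      refine ⟨fun _ => hs, fun h => ?_⟩
      have := j.isLt
      omega
    have hS : ∀ᶠ s in (atTop : Filter ℝ), lam < Sfun t β s :=
      (tendsto_Sfun_atTop t β).eventually (eventually_gt_atTop lam)
    obtain ⟨v, hv1, hv2⟩ := (hg.and hS).exists
    exact ⟨v, hv1, hv2⟩

private lemma gap_Icc_subset {n : ℕ} (t : Fin m → ℝ) (k : Fin n) {u v : ℝ}
    (hu : u ∈ Gap t k) (hv : v ∈ Gap t k) : Set.Icc u v ⊆ Gap t k := by
  intro s hs
  intro j
  exact ⟨fun h => lt_of_lt_of_le ((hu j).1 h) hs.1, fun h => lt_of_le_of_lt hs.2 ((hv j).2 h)⟩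

private lemma Sfun_continuousOn {n : ℕ} (t β : Fin m → ℝ) (k : Fin n) {u v : ℝ}
    (hu : u ∈ Gap t k) (hv : v ∈ Gap t k) : ContinuousOn (Sfun t β) (Set.Icc u v) := by
  intro s hs
  have hsg : s ∈ Gap t k := gap_Icc_subset t k hu hv hs
  apply ContinuousAt.continuousWithinAt
  have : Tendsto (Sfun t β) (𝓝 s) (𝓝 (s - ∑ j, β j / (s - t j))) := by
    apply Tendsto.sub tendsto_id
    apply tendsto_sum_part t β _ tendsto_id
    intro j _
    rcases lt_or_ge (j : ℕ) (k : ℕ) with h | h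
    · exact ne_of_gt ((hsg j).1 h)
    · exact ne_of_lt ((hsg j).2 h)
  exact this

private lemma level_exists {n : ℕ} (t β : Fin m → ℝ) (ht : StrictMono t) (hβ : ∀ j, 0 < β j)
    (hmn : n ≤ m + 1) (k : Fin n) (lam : ℝ) :
    ∃ s ∈ Gap t k, Sfun t β s = lam := by
  obtain ⟨u, hu, hul⟩ := exists_low t β ht hβ hmn k lam
  obtain ⟨v, hv, hvl⟩ := exists_high t β ht hβ k lam
  have huv : u < v := by
    rcases lt_trichotomy u v with h | h | h
    · exact h
    · rw [h] at hul
      linarith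
    · have := Sfun_strictMono t β hβ k hv hu h
      linarith
  have hIcc := intermediate_value_Icc huv.le (Sfun_continuousOn t β k hu hv)
  have hlam : lam ∈ Set.Icc (Sfun t β u) (Sfun t β v) := ⟨hul.le, hvl.le⟩
  obtain ⟨s, hs1, hs2⟩ := hIcc hlam
  exact ⟨s, gap_Icc_subset t k hu hv hs1, hs2⟩

private lemma pair_term_eq'' (s : ℝ) (z : ℂ) (hz : z.im ≠ 0) :
    1 / ((s : ℂ) - z) + 1 / ((s : ℂ) - conj z)
      = ((2 * (s - z.re) / ((s - z.re) ^ 2 + z.im ^ 2) : ℝ) : ℂ) := by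
  have h := pair_term_eq s z.re z.im hz
  rwa [Complex.re_add_im z] at h

private lemma complex_eq_iff_real {n' : ℕ} (ζ : Fin n' → ℂ) (hζ : ∀ j, 0 < (ζ j).im)
    {ι : Type*} (u : ℝ) (v : ι → ℝ) (K : Finset ι) :
    ((∑ j ∈ K, 2 / ((u : ℂ) - (v j : ℂ)))
      - ∑ j, (1 / ((u : ℂ) - ζ j) + 1 / ((u : ℂ) - conj (ζ j))) = 0)
    ↔ ∑ j ∈ K, 2 / (u - v j)
        = ∑ j, 2 * (u - (ζ j).re) / ((u - (ζ j).re) ^ 2 + ((ζ j).im) ^ 2) := by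
  have h1 : (∑ j ∈ K, 2 / ((u : ℂ) - (v j : ℂ)))
      = ((∑ j ∈ K, 2 / (u - v j) : ℝ) : ℂ) := by
    rw [Complex.ofReal_sum]
    apply Finset.sum_congr rfl
    intro j _
    push_cast
    rfl
  have h2 : (∑ j, (1 / ((u : ℂ) - ζ j) + 1 / ((u : ℂ) - conj (ζ j))))
      = ((∑ j, 2 * (u - (ζ j).re) / ((u - (ζ j).re) ^ 2 + ((ζ j).im) ^ 2) : ℝ) : ℂ) := by
    rw [Complex.ofReal_sum]
    apply Finset.sum_congr rfl
    intro j _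
    exact pair_term_eq'' u (ζ j) (ne_of_gt (hζ j))
  rw [h1, h2, ← Complex.ofReal_sub, Complex.ofReal_eq_zero, sub_eq_zero]

private lemma Qpoly_logderiv (a b : Fin m → ℝ) (hb : ∀ j, b j ≠ 0) (s : ℝ) :
    (derivative (Qpoly a b)).eval s
      = (Qpoly a b).eval s * ∑ j, 2 * (s - a j) / ((s - a j) ^ 2 + (b j) ^ 2) := by
  classical
  rw [Qpoly, eval_derivative_prod' _ _ _ (fun j _ => by
    simp only [eval_add, eval_pow, eval_sub, eval_X, eval_C]
    have := hb j
    positivity)]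
  rw [eval_prod]
  congr 1
  apply Finset.sum_congr rfl
  intro j _
  have hdj : derivative ((X - C (a j)) ^ 2 + C ((b j) ^ 2)) = C 2 * (X - C (a j)) := by
    have hdi : derivative (X - C (a j)) = (1 : Polynomial ℝ) := by
      rw [derivative_sub, derivative_X, derivative_C, sub_zero]
    rw [derivative_add, derivative_C, add_zero, derivative_pow, hdi, pow_one, mul_one]
    norm_num
  rw [hdj]
  simp only [eval_mul, eval_C, eval_add, eval_pow, eval_sub, eval_X]

private lemma rpoly_logderiv (t : Fin m → ℝ) (hinj : Function.Injective t) (k : Fin m) :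
    (derivative (rpoly t k)).eval (t k)
      = (rpoly t k).eval (t k) * ∑ j ∈ Finset.univ.erase k, 1 / (t k - t j) := by
  classical
  rw [rpoly, eval_derivative_prod' _ _ _ (fun j hj => by
    simp only [eval_sub, eval_X, eval_C, sub_ne_zero]
    exact fun h => (Finset.mem_erase.1 hj).1 (hinj h.symm))]
  rw [eval_prod]
  congr 1
  apply Finset.sum_congr rfl
  intro j _
  have hdi : derivative (X - C (t j)) = (1 : Polynomial ℝ) := by
    rw [derivative_sub, derivative_X, derivative_C, sub_zero]
  rw [hdi]
  simp

end HelperLemmas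

section MainProof
open Polynomial

/-- **Theorem 2 (ii).** Let `t 1 < … < t (n-1)` be the unique ordered solution of the
equilibrium equations (17) (with `t 0 = -∞`, `t n = +∞`). Fix `k₀` and a point
`x₀ ∈ (t (k₀-1), t k₀)`. Then there are unique points `x k ∈ (t (k-1), t k)` for the
remaining indices such that `x 1 < … < x n` satisfy the equilibrium equations (10). -/
theorem equilibrium_n_points_unique_given_one
    (n : ℕ) (hn : 2 ≤ n) (ζ : Fin (n - 1) → ℂ) (hζ : ∀ j, 0 < (ζ j).im)
    (t : Fin (n - 1) → ℝ) (ht : StrictMono t)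
    (ht17 : ∀ k : Fin (n - 1),
      (∑ j ∈ Finset.univ.erase k, 2 / ((t k : ℂ) - (t j : ℂ)))
        - ∑ j, (1 / ((t k : ℂ) - ζ j) + 1 / ((t k : ℂ) - conj (ζ j))) = 0)
    (k₀ : Fin n) (x₀ : ℝ)
    (hx₀ : ∀ j : Fin (n - 1),
      ((j : ℕ) < (k₀ : ℕ) → t j < x₀) ∧ ((k₀ : ℕ) ≤ (j : ℕ) → x₀ < t j)) :
    ∃! x : Fin n → ℝ,
      x k₀ = x₀ ∧ StrictMono x ∧
      (∀ k : Fin n, ∀ j : Fin (n - 1),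
        ((j : ℕ) < (k : ℕ) → t j < x k) ∧ ((k : ℕ) ≤ (j : ℕ) → x k < t j)) ∧
      (∀ k : Fin n,
        (∑ j ∈ Finset.univ.erase k, 2 / ((x k : ℂ) - (x j : ℂ)))
          - ∑ j, (1 / ((x k : ℂ) - ζ j) + 1 / ((x k : ℂ) - conj (ζ j))) = 0) := by
  classical
  have hinj : Function.Injective t := ht.injective
  set a : Fin (n - 1) → ℝ := fun j => (ζ j).re with ha
  set b : Fin (n - 1) → ℝ := fun j => (ζ j).im with hbd
  have hb : ∀ j, b j ≠ 0 := fun j => ne_of_gt (hζ j)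
  have hβ : ∀ j, 0 < βcoef t a b j := fun j =>
    div_pos (Qpoly_eval_pos a b hb _) (pow_two_pos_of_ne_zero (rpoly_eval_ne t hinj j))
  have hmn : (n - 1) + 1 = n := by omega
  have hmn' : n ≤ (n - 1) + 1 := by omega
  have h17R : ∀ k : Fin (n - 1), ∑ j ∈ Finset.univ.erase k, 2 / (t k - t j)
      = ∑ j, 2 * (t k - a j) / ((t k - a j) ^ 2 + (b j) ^ 2) := by
    intro k
    exact (complex_eq_iff_real ζ hζ (t k) t _).1 (ht17 k)
  have h17P : ∀ k, (derivative (Qpoly a b)).eval (t k) * (rpoly t k).eval (t k)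
      = 2 * (Qpoly a b).eval (t k) * (derivative (rpoly t k)).eval (t k) := by
    intro k
    rw [Qpoly_logderiv a b hb, rpoly_logderiv t hinj k]
    have hA : (∑ j, 2 * (t k - a j) / ((t k - a j) ^ 2 + (b j) ^ 2))
        = 2 * ∑ j ∈ Finset.univ.erase k, 1 / (t k - t j) := by
      rw [← h17R k, Finset.mul_sum]
      apply Finset.sum_congr rfl
      intro j _
      rw [mul_one_div]
    rw [hA]
    ring
  have hx₀g : x₀ ∈ Gap t k₀ := hx₀
  have hEx : ∀ k : Fin n, ∃ s ∈ Gap t k, Sfun t (βcoef t a b) s = Sfun t (βcoef t a b) x₀ :=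
    fun k => level_exists t (βcoef t a b) ht hβ hmn' k _
  set x : Fin n → ℝ := fun k => if h : k = k₀ then x₀ else (hEx k).choose with hxdef
  have hxg : ∀ k, x k ∈ Gap t k := by
    intro k
    by_cases h : k = k₀
    · subst h
      simp only [hxdef, dif_pos]
      exact hx₀g
    · simp only [hxdef, dif_neg h]
      exact (hEx k).choose_spec.1
  have hxS : ∀ k, Sfun t (βcoef t a b) (x k) = Sfun t (βcoef t a b) x₀ := by
    intro k
    by_cases h : k = k₀
    · subst h
      simp only [hxdef, dif_pos]
    · simp only [hxdef, dif_neg h]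
      exact (hEx k).choose_spec.2
  have hxmono : StrictMono x := fun p q h => gap_lt t hmn' h (hxg p) (hxg q)
  have hxt : ∀ (k : Fin n) (j : Fin (n - 1)), x k ≠ t j := fun k j => gap_ne t (hxg k) j
  have hxreal := level_equations t a b hinj hb h17P hmn x hxmono hxt _ hxS
  have hxk₀ : x k₀ = x₀ := by simp only [hxdef, dif_pos]
  have huniq : ∀ (k : Fin n) (u v : ℝ), u ∈ Gap t k → v ∈ Gap t k →
      Sfun t (βcoef t a b) u = Sfun t (βcoef t a b) v → u = v := by
    intro k u v hu hv he
    rcases lt_trichotomy u v with h | h | h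
    · have := Sfun_strictMono t _ hβ k hu hv h
      linarith
    · exact h
    · have := Sfun_strictMono t _ hβ k hv hu h
      linarith
  refine ⟨x, ⟨hxk₀, hxmono, fun k => hxg k, ?_⟩, ?_⟩
  · intro k
    exact (complex_eq_iff_real ζ hζ (x k) x _).2 (hxreal k)
  · rintro y ⟨hyk₀, hymono, hygap, hyeq⟩
    have hyg : ∀ k, y k ∈ Gap t k := fun k => hygap k
    have hyreal : ∀ k, ∑ j ∈ Finset.univ.erase k, 2 / (y k - y j)
        = ∑ j, 2 * (y k - a j) / ((y k - a j) ^ 2 + (b j) ^ 2) :=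
      fun k => (complex_eq_iff_real ζ hζ (y k) y _).1 (hyeq k)
    obtain ⟨m₀, -, hm₀⟩ := Finset.exists_min_image Finset.univ
      (fun k => Sfun t (βcoef t a b) (y k)) ⟨k₀, Finset.mem_univ k₀⟩
    have hall : ∀ k, Sfun t (βcoef t a b) (y k) = Sfun t (βcoef t a b) (y m₀) := by
      by_contra hc
      push_neg at hc
      obtain ⟨k', hk'⟩ := hc
      have hk'gt : Sfun t (βcoef t a b) (y m₀) < Sfun t (βcoef t a b) (y k') :=
        lt_of_le_of_ne (hm₀ k' (Finset.mem_univ k')) (Ne.symm hk')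
      have hEz : ∀ k : Fin n, ∃ s ∈ Gap t k,
          Sfun t (βcoef t a b) s = Sfun t (βcoef t a b) (y m₀) :=
        fun k => level_exists t (βcoef t a b) ht hβ hmn' k _
      set z : Fin n → ℝ := fun k => (hEz k).choose with hzdef
      have hzg : ∀ k, z k ∈ Gap t k := fun k => (hEz k).choose_spec.1
      have hzS : ∀ k, Sfun t (βcoef t a b) (z k) = Sfun t (βcoef t a b) (y m₀) :=
        fun k => (hEz k).choose_spec.2
      have hzmono : StrictMono z := fun p q h => gap_lt t hmn' h (hzg p) (hzg q)
      have hzt : ∀ (k : Fin n) (j : Fin (n - 1)), z k ≠ t j := fun k j => gap_ne t (hzg k) j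
      have hzreal := level_equations t a b hinj hb h17P hmn z hzmono hzt _ hzS
      have heqm : z m₀ = y m₀ := huniq m₀ _ _ (hzg m₀) (hyg m₀) (hzS m₀)
      have hzy : ∀ k, z k ≤ y k := by
        intro k
        by_contra h
        push_neg at h
        have := Sfun_strictMono t _ hβ k (hyg k) (hzg k) h
        rw [hzS k] at this
        exact absurd this (not_lt.2 (hm₀ k (Finset.mem_univ k)))
      have hk'lt : z k' < y k' := by
        rcases lt_or_eq_of_le (hzy k') with h | h
        · exact h
        · exfalso
          apply hk'
          rw [← h, hzS k']
      have hk'm : k' ≠ m₀ := by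
        intro h
        rw [h] at hk'
        exact hk' rfl
      have hterm : ∀ j ∈ Finset.univ.erase m₀, 2 / (z m₀ - z j) ≤ 2 / (y m₀ - y j) := by
        intro j hj
        have hjm : j ≠ m₀ := (Finset.mem_erase.1 hj).1
        have hd2 : y m₀ - y j ≤ z m₀ - z j := by
          have h1 := hzy j
          rw [← heqm]
          linarith
        rcases lt_or_gt_of_ne hjm with hlt | hgt
        · have h1 : 0 < y m₀ - y j := sub_pos.2 (hymono hlt)
          calc 2 / (z m₀ - z j) = 2 * (1 / (z m₀ - z j)) := (mul_one_div 2 _).symm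
            _ ≤ 2 * (1 / (y m₀ - y j)) := by
                have := one_div_le_one_div_of_le h1 hd2
                linarith
            _ = 2 / (y m₀ - y j) := mul_one_div 2 _
        · have h1 : z m₀ - z j < 0 := sub_neg.2 (hzmono hgt)
          calc 2 / (z m₀ - z j) = 2 * (1 / (z m₀ - z j)) := (mul_one_div 2 _).symm
            _ ≤ 2 * (1 / (y m₀ - y j)) := by
                have := one_div_le_one_div_of_neg_of_le h1 hd2
                linarith
            _ = 2 / (y m₀ - y j) := mul_one_div 2 _
      have hstrict : ∃ j ∈ Finset.univ.erase m₀, 2 / (z m₀ - z j) < 2 / (y m₀ - y j) := by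
        refine ⟨k', Finset.mem_erase.2 ⟨hk'm, Finset.mem_univ k'⟩, ?_⟩
        have hd2 : y m₀ - y k' < z m₀ - z k' := by
          linarith [heqm, hk'lt]
        rcases lt_or_gt_of_ne hk'm with hlt | hgt
        · have h1 : 0 < y m₀ - y k' := sub_pos.2 (hymono hlt)
          calc 2 / (z m₀ - z k') = 2 * (1 / (z m₀ - z k')) := (mul_one_div 2 _).symm
            _ < 2 * (1 / (y m₀ - y k')) := by
                have := one_div_lt_one_div_of_lt h1 hd2
                linarith
            _ = 2 / (y m₀ - y k') := mul_one_div 2 _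
        · have h1 : z m₀ - z k' < 0 := sub_neg.2 (hzmono hgt)
          calc 2 / (z m₀ - z k') = 2 * (1 / (z m₀ - z k')) := (mul_one_div 2 _).symm
            _ < 2 * (1 / (y m₀ - y k')) := by
                have := one_div_lt_one_div_of_neg_of_lt h1 hd2
                linarith
            _ = 2 / (y m₀ - y k') := mul_one_div 2 _
      have hlt := Finset.sum_lt_sum hterm hstrict
      have h1 := hyreal m₀
      have h2 := hzreal m₀
      rw [heqm] at hlt h2
      rw [h1, h2] at hlt
      exact absurd hlt (lt_irrefl _)
    have hylam : ∀ k, Sfun t (βcoef t a b) (y k) = Sfun t (βcoef t a b) x₀ := by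
      intro k
      have h1 := hall k
      have h2 := hall k₀
      rw [hyk₀] at h2
      rw [h1, ← h2]
    funext k
    exact huniq k (y k) (x k) (hyg k) (hxg k) (by rw [hylam k, hxS k])

end MainProof
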